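/- Let V be a finite-dimensional real inner product space, φ an alternating p-form of comass one on V, and Ω ⊆ V a bounded open set with C^∞ defining function ρ : W → ℝ on an open set W containing the closure of Ω (Ω = {x ∈ W : ρ(x) < 0}, ∂Ω = {x ∈ W : ρ(x) = 0}, and Dρ(x) ≠ 0 on ∂Ω) whose boundary is strictly φ-convex: for every x ∈ ∂Ω and every φ-plane (e₁,…,e_p) ∈ G(φ) with Dρ(x)(e_j) = 0 for all j, Σ_{j=1}^p D²ρ(x)(e_j,e_j) > 0. Then there exists A₀ > 0 such that for every A ≥ A₀ there is an open set U with ∂Ω ⊆ U ⊆ W on which the function ρ̄ := ρ + A·ρ² satisfies: Σ_{j=1}^p D²ρ̄(x)(e_j,e_j) > 0 for every x ∈ U and every φ-plane (e₁,…,e_p) ∈ G(φ); moreover Dρ̄(x) = Dρ(x) ≠ 0 for x ∈ ∂Ω, and {x ∈ U : ρ̄(x) < 0} = Ω ∩ U. (Proposition 5.7, Euclidean case) -/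

import Mathlib

open scoped RealInnerProductSpace ContDiff Topology

noncomputable section

variable {V : Type*} [NormedAddCommGroup V] [InnerProductSpace ℝ V] [FiniteDimensional ℝ V]

/-- Any multilinear map on a finite-dimensional space is continuous. -/
lemma multilinearMap_continuous_of_finiteDimensional (p : ℕ) :
    ∀ f : MultilinearMap ℝ (fun _ : Fin p => V) ℝ, Continuous fun e => f e := by
  induction p with
  | zero =>
    intro f
    have h : (fun e : Fin 0 → V => f e) = fun _ => f (fun i => i.elim0) := by
      funext e; congr 1; funext i; exact i.elim0
    rw [h]; exact continuous_const
  | succ n ih =>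
    intro f
    set b := Module.finBasis ℝ V with hb
    have key : ∀ e : Fin (n + 1) → V,
        f e = ∑ i, b.repr (e 0) i • (f.curryLeft (b i)) (Fin.tail e) := by
      intro e
      have h1 : f e = f.curryLeft (e 0) (Fin.tail e) := by
        rw [MultilinearMap.curryLeft_apply, Fin.cons_self_tail]
      rw [h1]
      conv_lhs => rw [← Module.Basis.sum_repr b (e 0)]
      rw [map_sum, MultilinearMap.sum_apply]
      refine Finset.sum_congr rfl fun i _ => ?_
      rw [map_smul, MultilinearMap.smul_apply]
    have h : (fun e : Fin (n + 1) → V => f e)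
        = fun e => ∑ i, b.repr (e 0) i • (f.curryLeft (b i)) (Fin.tail e) := funext key
    rw [h]
    apply continuous_finset_sum
    intro i _
    have h1' : Continuous fun v : V => b.repr v i :=
      (LinearMap.continuous_of_finiteDimensional (b.coord i)).congr fun v => by
        simp [Module.Basis.coord_apply]
    have h1 : Continuous fun e : Fin (n + 1) → V => b.repr (e 0) i :=
      h1'.comp (continuous_apply 0)
    have htail : Continuous (Fin.tail : (Fin (n + 1) → V) → (Fin n → V)) :=
      continuous_pi fun j => continuous_apply j.succ
    exact h1.smul ((ih (f.curryLeft (b i))).comp htail)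

set_option maxHeartbeats 1000000 in
theorem defining_function_plus_square {p : ℕ} (hp : 1 ≤ p)
    (φ : V [⋀^Fin p]→ₗ[ℝ] ℝ)
    (hcomass : ∀ e : Fin p → V, Orthonormal ℝ e → φ e ≤ 1)
    (Ω W : Set V) (hΩo : IsOpen Ω) (hΩb : Bornology.IsBounded Ω) (hWo : IsOpen W)
    (hWcl : closure Ω ⊆ W)
    (ρ : V → ℝ) (hρ : ContDiffOn ℝ (⊤ : ℕ∞) ρ W)
    (hΩdef : Ω = {x ∈ W | ρ x < 0})
    (hbdry : frontier Ω = {x ∈ W | ρ x = 0})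
    (hgrad : ∀ x ∈ frontier Ω, fderiv ℝ ρ x ≠ 0)
    (hconv : ∀ x ∈ frontier Ω, ∀ e : Fin p → V, Orthonormal ℝ e → φ e = 1 →
      (∀ j, fderiv ℝ ρ x (e j) = 0) →
      0 < ∑ j, iteratedFDeriv ℝ 2 ρ x ![e j, e j]) :
    ∃ A₀ : ℝ, 0 < A₀ ∧ ∀ A : ℝ, A₀ ≤ A →
      ∃ U : Set V, IsOpen U ∧ frontier Ω ⊆ U ∧ U ⊆ W ∧
        (∀ x ∈ U, ∀ e : Fin p → V, Orthonormal ℝ e → φ e = 1 →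
          0 < ∑ j, iteratedFDeriv ℝ 2 (fun y => ρ y + A * (ρ y) ^ 2) x ![e j, e j]) ∧
        (∀ x ∈ frontier Ω,
          fderiv ℝ (fun y => ρ y + A * (ρ y) ^ 2) x = fderiv ℝ ρ x ∧ fderiv ℝ ρ x ≠ 0) ∧
        {x ∈ U | ρ x + A * (ρ x) ^ 2 < 0} = Ω ∩ U := by
  classical
  have hρW : ∀ x ∈ W, ContDiffAt ℝ ∞ ρ x := fun x hx => hρ.contDiffAt (hWo.mem_nhds hx)
  set F : V → V →L[ℝ] ℝ := fderiv ℝ ρ with hFdef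
  have hFd : ∀ x ∈ W, ContDiffAt ℝ ∞ F x := fun x hx => (hρW x hx).fderiv_right (m := ∞) (le_of_eq rfl)
  have hρdiff : ∀ x ∈ W, HasFDerivAt ρ (F x) x := fun x hx =>
    ((hρW x hx).differentiableAt (by simp)).hasFDerivAt
  have hρc : ∀ x ∈ W, ContinuousAt ρ x := fun x hx => (hρW x hx).continuousAt
  have hFc : ∀ x ∈ W, ContinuousAt F x := fun x hx => (hFd x hx).continuousAt
  have hDFc : ∀ x ∈ W, ContinuousAt (fderiv ℝ F) x := fun x hx =>
    ((hFd x hx).fderiv_right (m := ∞) (le_of_eq rfl)).continuousAt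
  -- first derivative of the modified function
  have hder : ∀ (A : ℝ), ∀ x ∈ W,
      HasFDerivAt (fun y => ρ y + A * (ρ y) ^ 2) ((1 + 2 * A * ρ x) • F x) x := by
    intro A x hx
    have h1 := hρdiff x hx
    have h2 : HasFDerivAt (fun y => ρ y + A * (ρ y * ρ y))
        (F x + A • (ρ x • F x + ρ x • F x)) x := h1.add ((h1.mul h1).const_mul A)
    have hfun : (fun y => ρ y + A * (ρ y) ^ 2) = fun y => ρ y + A * (ρ y * ρ y) := by
      funext y; ring
    have hder' : (1 + 2 * A * ρ x) • F x = F x + A • (ρ x • F x + ρ x • F x) := by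
      ext v
      simp only [ContinuousLinearMap.add_apply, ContinuousLinearMap.coe_smul',
        Pi.smul_apply, smul_eq_mul]
      ring
    rw [hfun, hder']
    exact h2
  have hfderiv : ∀ (A : ℝ), ∀ x ∈ W,
      fderiv ℝ (fun y => ρ y + A * (ρ y) ^ 2) x = (1 + 2 * A * ρ x) • F x :=
    fun A x hx => (hder A x hx).fderiv
  -- second derivative formulas
  have hL0 : ∀ (x : V) (v : V), iteratedFDeriv ℝ 2 ρ x ![v, v] = fderiv ℝ F x v v := by
    intro x v
    rw [iteratedFDeriv_two_apply, ← hFdef]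
    simp
  have hL1 : ∀ (A : ℝ), ∀ x ∈ W, ∀ v : V,
      iteratedFDeriv ℝ 2 (fun y => ρ y + A * (ρ y) ^ 2) x ![v, v]
        = 2 * A * (F x v) ^ 2 + (1 + 2 * A * ρ x) * (fderiv ℝ F x v v) := by
    intro A x hx v
    have hev : fderiv ℝ (fun y => ρ y + A * (ρ y) ^ 2) =ᶠ[𝓝 x]
        fun y => (1 + 2 * A * ρ y) • F y := by
      filter_upwards [hWo.mem_nhds hx] with y hy using hfderiv A y hy
    have hc : HasFDerivAt (fun y => 1 + 2 * A * ρ y) ((2 * A) • F x) x :=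
      ((hρdiff x hx).const_mul (2 * A)).const_add 1
    have hF' : HasFDerivAt F (fderiv ℝ F x) x :=
      ((hFd x hx).differentiableAt (by simp)).hasFDerivAt
    have hsmul := hc.smul hF'
    rw [iteratedFDeriv_two_apply, hev.fderiv_eq,
      show (fun y => (1 + 2 * A * ρ y) • F y) = (fun y => 1 + 2 * A * ρ y) • F from rfl, hsmul.fderiv]
    simp only [Matrix.cons_val_zero, Matrix.cons_val_one, Matrix.head_cons,
      ContinuousLinearMap.add_apply, ContinuousLinearMap.coe_smul', Pi.smul_apply,
      ContinuousLinearMap.smulRight_apply, smul_eq_mul]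
    ring
  -- continuity of the relevant quantities in (x, e) jointly
  have happ1 : ∀ (j : Fin p), ∀ z : V × (Fin p → V), z.1 ∈ W →
      ContinuousAt (fun z : V × (Fin p → V) => F z.1 (z.2 j)) z := by
    intro j z hz
    exact (isBoundedBilinearMap_apply.continuous.continuousAt).comp
      (((hFc _ hz).comp continuousAt_fst).prodMk
        (((continuous_apply j).comp continuous_snd).continuousAt))
  have happ2 : ∀ (j : Fin p), ∀ z : V × (Fin p → V), z.1 ∈ W →
      ContinuousAt (fun z : V × (Fin p → V) => fderiv ℝ F z.1 (z.2 j) (z.2 j)) z := by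
    intro j z hz
    have inner1 : ContinuousAt (fun z : V × (Fin p → V) => fderiv ℝ F z.1 (z.2 j)) z :=
      (isBoundedBilinearMap_apply.continuous.continuousAt).comp
        (((hDFc _ hz).comp continuousAt_fst).prodMk
          (((continuous_apply j).comp continuous_snd).continuousAt))
    exact (isBoundedBilinearMap_apply.continuous.continuousAt).comp
      (inner1.prodMk (((continuous_apply j).comp continuous_snd).continuousAt))
  have hGc : ∀ z : V × (Fin p → V), z.1 ∈ W →
      ContinuousAt (fun z : V × (Fin p → V) => ∑ j, (F z.1 (z.2 j)) ^ 2) z := by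
    intro z hz
    exact tendsto_finset_sum _ fun j _ => (happ1 j z hz).pow 2
  have hQc : ∀ z : V × (Fin p → V), z.1 ∈ W →
      ContinuousAt (fun z : V × (Fin p → V) => ∑ j, fderiv ℝ F z.1 (z.2 j) (z.2 j)) z := by
    intro z hz
    exact tendsto_finset_sum _ fun j _ => happ2 j z hz
  have hGnn : ∀ z : V × (Fin p → V), 0 ≤ ∑ j, (F z.1 (z.2 j)) ^ 2 := fun z =>
    Finset.sum_nonneg fun j _ => sq_nonneg _
  -- compactness of the boundary and of the set of φ-planes
  have hKW : frontier Ω ⊆ W := fun x hx => hWcl (frontier_subset_closure hx)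
  have hρK : ∀ x ∈ frontier Ω, ρ x = 0 := by
    intro x hx; rw [hbdry] at hx; exact hx.2
  have hKc : IsCompact (frontier Ω) :=
    Metric.isCompact_of_isClosed_isBounded isClosed_frontier
      ((hΩb.closure).subset frontier_subset_closure)
  set S : Set (Fin p → V) := {e | Orthonormal ℝ e ∧ φ e = 1} with hSdef
  have hφcont : Continuous fun e : Fin p → V => φ e :=
    multilinearMap_continuous_of_finiteDimensional p φ.toMultilinearMap
  have hSc : IsCompact S := by
    apply Metric.isCompact_of_isClosed_isBounded
    · have hS : S = {e : Fin p → V | ∀ i j, ⟪e i, e j⟫ = if i = j then (1 : ℝ) else 0}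
          ∩ {e | φ e = 1} := by
        ext e
        simp only [hSdef, Set.mem_setOf_eq, Set.mem_inter_iff, orthonormal_iff_ite]
      rw [hS]
      refine IsClosed.inter ?_ (isClosed_eq hφcont continuous_const)
      simp only [Set.setOf_forall]
      exact isClosed_iInter fun i => isClosed_iInter fun j =>
        isClosed_eq ((continuous_apply i).inner (continuous_apply j)) continuous_const
    · rw [isBounded_iff_forall_norm_le]
      exact ⟨1, fun e he => (pi_norm_le_iff_of_nonneg zero_le_one).2 fun i =>
        le_of_eq (he.1.1 i)⟩
  -- local positivity thresholds
  have loc : ∀ z ∈ (frontier Ω) ×ˢ S, ∃ t : ℝ, ∃ n : Set (V × (Fin p → V)), n ∈ 𝓝 z ∧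
      ∀ z' ∈ n, ∀ A : ℝ, t ≤ A →
        0 < 2 * A * (∑ j, (F z'.1 (z'.2 j)) ^ 2) + ∑ j, fderiv ℝ F z'.1 (z'.2 j) (z'.2 j) := by
    rintro ⟨x, e⟩ ⟨hxK, heS⟩
    have hxW := hKW hxK
    set a := ∑ j, (F x (e j)) ^ 2 with ha
    set b := ∑ j, fderiv ℝ F x (e j) (e j) with hb
    have hGca := hGc (x, e) hxW
    have hQca := hQc (x, e) hxW
    rcases lt_or_ge 0 a with hpos | hle
    · refine ⟨max 1 ((1 - b) / a), _,
        (hGca.eventually (eventually_gt_nhds (show a / 2 < a by linarith))).and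
          (hQca.eventually (eventually_gt_nhds (show b - 1 < b by linarith))), ?_⟩
      rintro ⟨x', e'⟩ ⟨hG', hQ'⟩ A hA
      have hA1 : (1 : ℝ) ≤ A := le_trans (le_max_left _ _) hA
      have hA2 : (1 - b) / a ≤ A := le_trans (le_max_right _ _) hA
      have h3 : 1 - b ≤ A * a := (div_le_iff₀ hpos).mp hA2
      simp only [Set.mem_setOf_eq] at hG' hQ'
      nlinarith [hG', hQ']
    · have h0 : a = 0 := le_antisymm hle (hGnn (x, e))
      have ha0 : ∀ j, F x (e j) = 0 := by
        intro j
        have hsum0 : ∑ j, (F x (e j)) ^ 2 = 0 := by rw [← ha]; exact h0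
        have := (Finset.sum_eq_zero_iff_of_nonneg
          (fun j _ => sq_nonneg (F x (e j)))).mp hsum0 j (Finset.mem_univ j)
        exact (pow_eq_zero_iff two_ne_zero).mp this
      have hbpos : 0 < b := by
        have hcv := hconv x hxK e heS.1 heS.2 ha0
        have heq : ∑ j, iteratedFDeriv ℝ 2 ρ x ![e j, e j] = b := by
          rw [hb]
          exact Finset.sum_congr rfl fun j _ => hL0 x (e j)
        rwa [heq] at hcv
      refine ⟨1, _, hQca.eventually (eventually_gt_nhds hbpos), ?_⟩
      rintro ⟨x', e'⟩ hQ' A hA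
      have hnn := hGnn (x', e')
      simp only [Set.mem_setOf_eq] at hQ'
      nlinarith
  choose t n hn hnpos using loc
  obtain ⟨ts, hts⟩ := (hKc.prod hSc).elim_nhds_subcover' (fun z hz => n z hz)
    (fun z hz => hn z hz)
  set A₀ : ℝ := 1 + ∑ z ∈ ts, |t z z.2| with hA₀def
  have hA₀1 : (1 : ℝ) ≤ A₀ :=
    le_add_of_nonneg_right (Finset.sum_nonneg fun _ _ => abs_nonneg _)
  have hA₀pos : (0 : ℝ) < A₀ := lt_of_lt_of_le one_pos hA₀1
  have key : ∀ z ∈ (frontier Ω) ×ˢ S, ∀ A : ℝ, A₀ ≤ A →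
      0 < 2 * A * (∑ j, (F z.1 (z.2 j)) ^ 2) + ∑ j, fderiv ℝ F z.1 (z.2 j) (z.2 j) := by
    intro z hz A hA
    rcases Set.mem_iUnion₂.mp (hts hz) with ⟨zi, hzi, hzmem⟩
    refine hnpos zi zi.2 z hzmem A ?_
    have h1 : t zi zi.2 ≤ |t zi zi.2| := le_abs_self _
    have h2 : |t zi zi.2| ≤ ∑ z ∈ ts, |t z z.2| :=
      Finset.single_le_sum (f := fun z : ↥((frontier Ω) ×ˢ S) => |t z z.2|)
        (fun _ _ => abs_nonneg _) hzi
    linarith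
  refine ⟨A₀, hA₀pos, ?_⟩
  intro A hA
  have hApos : 0 < A := lt_of_lt_of_le hA₀pos hA
  have hA1 : (1 : ℝ) ≤ A := le_trans hA₀1 hA
  -- the sum identity
  have hsum : ∀ x ∈ W, ∀ e : Fin p → V,
      (∑ j, iteratedFDeriv ℝ 2 (fun y => ρ y + A * (ρ y) ^ 2) x ![e j, e j])
        = 2 * A * (∑ j, (F x (e j)) ^ 2)
          + (1 + 2 * A * ρ x) * (∑ j, fderiv ℝ F x (e j) (e j)) := by
    intro x hx e
    calc (∑ j, iteratedFDeriv ℝ 2 (fun y => ρ y + A * (ρ y) ^ 2) x ![e j, e j])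
        = ∑ j, (2 * A * (F x (e j)) ^ 2
            + (1 + 2 * A * ρ x) * (fderiv ℝ F x (e j) (e j))) :=
          Finset.sum_congr rfl fun j _ => hL1 A x hx (e j)
      _ = _ := by rw [Finset.sum_add_distrib, ← Finset.mul_sum, ← Finset.mul_sum]
  set U : Set V := {x | x ∈ W ∧ |ρ x| * A < 1 / 2 ∧ ∀ e : Fin p → V, Orthonormal ℝ e →
      φ e = 1 → 0 < ∑ j, iteratedFDeriv ℝ 2 (fun y => ρ y + A * (ρ y) ^ 2) x ![e j, e j]}
    with hUdef
  have hUopen : IsOpen U := by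
    rw [isOpen_iff_mem_nhds]
    intro x₀ hx₀
    obtain ⟨hx₀W, hx₀ρ, hx₀pos⟩ := hx₀
    set nn : Set (V × (Fin p → V)) := {z | z.1 ∈ W ∧
        0 < 2 * A * (∑ j, (F z.1 (z.2 j)) ^ 2)
          + (1 + 2 * A * ρ z.1) * (∑ j, fderiv ℝ F z.1 (z.2 j) (z.2 j))} with hnndef
    have hnopen : IsOpen nn := by
      rw [isOpen_iff_mem_nhds]
      rintro z ⟨hzW, hzpos⟩
      have h1 : ∀ᶠ z' in 𝓝 z, z'.1 ∈ W :=
        continuousAt_fst.preimage_mem_nhds (hWo.mem_nhds hzW)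
      have hcont : ContinuousAt (fun z : V × (Fin p → V) =>
          2 * A * (∑ j, (F z.1 (z.2 j)) ^ 2)
            + (1 + 2 * A * ρ z.1) * (∑ j, fderiv ℝ F z.1 (z.2 j) (z.2 j))) z := by
        refine ContinuousAt.add (continuousAt_const.mul (hGc z hzW)) (ContinuousAt.mul ?_ (hQc z hzW))
        exact continuousAt_const.add (continuousAt_const.mul ((hρc _ hzW).comp continuousAt_fst))
      have h2 : ∀ᶠ z' in 𝓝 z, 0 < 2 * A * (∑ j, (F z'.1 (z'.2 j)) ^ 2)
          + (1 + 2 * A * ρ z'.1) * (∑ j, fderiv ℝ F z'.1 (z'.2 j) (z'.2 j)) :=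
        hcont.eventually (eventually_gt_nhds hzpos)
      filter_upwards [h1, h2] with z' hA' hB' using ⟨hA', hB'⟩
    have hsub : {x₀} ×ˢ S ⊆ nn := by
      rintro ⟨x', e⟩ ⟨hx', heS⟩
      have hx'eq : x' = x₀ := hx'
      subst hx'eq
      refine ⟨hx₀W, ?_⟩
      rw [← hsum x' hx₀W e]
      exact hx₀pos e heS.1 heS.2
    obtain ⟨u, v, hu, hv, hxu, hSv, huv⟩ :=
      generalized_tube_lemma isCompact_singleton hSc hnopen hsub
    have hρev : ∀ᶠ y in 𝓝 x₀, |ρ y| * A < 1 / 2 :=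
      (((hρc x₀ hx₀W).abs).mul continuousAt_const).eventually (eventually_lt_nhds hx₀ρ)
    filter_upwards [hu.mem_nhds (hxu rfl), hWo.mem_nhds hx₀W, hρev] with y hyu hyW hyρ
    refine ⟨hyW, hyρ, fun e he hφe => ?_⟩
    have hyn : (y, e) ∈ nn := huv (Set.mk_mem_prod hyu (hSv ⟨he, hφe⟩))
    rw [hsum y hyW e]
    exact hyn.2
  have hKU : frontier Ω ⊆ U := by
    intro x hx
    have hxW := hKW hx
    have hx0 := hρK x hx
    refine ⟨hxW, by rw [hx0]; norm_num, fun e he hφe => ?_⟩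
    rw [hsum x hxW e]
    have hk := key (x, e) ⟨hx, he, hφe⟩ A hA
    simp only at hk
    have h2 : (1 + 2 * A * ρ x) = 1 := by rw [hx0]; ring
    rw [h2, one_mul]
    linarith [hk]
  refine ⟨U, hUopen, hKU, fun x hx => hx.1, fun x hx => hx.2.2, ?_, ?_⟩
  · intro x hx
    have hxW := hKW hx
    have hx0 := hρK x hx
    constructor
    · rw [hfderiv A x hxW, hx0]
      norm_num
    · exact hgrad x hx
  · ext x
    simp only [Set.mem_setOf_eq, Set.mem_inter_iff]
    constructor
    · rintro ⟨hxU, hneg⟩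
      have hxρ := hxU.2.1
      have h1 : 0 < 1 + A * ρ x := by
        nlinarith [neg_abs_le (ρ x), mul_le_mul_of_nonneg_left (neg_abs_le (ρ x)) (le_of_lt hApos)]
      have h2 : ρ x < 0 := by
        by_contra h
        push_neg at h
        nlinarith [mul_nonneg (le_of_lt hApos) (sq_nonneg (ρ x))]
      exact ⟨by rw [hΩdef]; exact ⟨hxU.1, h2⟩, hxU⟩
    · rintro ⟨hxΩ, hxU⟩
      have hxρ := hxU.2.1
      have h2 : ρ x < 0 := by rw [hΩdef] at hxΩ; exact hxΩ.2
      have h1 : 0 < 1 + A * ρ x := by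
        nlinarith [neg_abs_le (ρ x), mul_le_mul_of_nonneg_left (neg_abs_le (ρ x)) (le_of_lt hApos)]
      refine ⟨hxU, ?_⟩
      nlinarith [mul_neg_of_neg_of_pos h2 h1]
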